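/- For the Hinge loss l(r,y) = (C₀(1−y) + C₁y)·max{0, 1 − (2y−1)r} with C₀, C₁ > 0, and d(θ,y) = (1/2)‖θ‖₂² + C·l(⟨x,θ⟩,y), any z ∈ ℝ satisfying z ∈ ∂l(·,0)(xᵀ(θ − yCxz)) − ∂l(·,1)(xᵀ(θ + (1−y)Cxz)) with x ≠ 0 belongs to the set {0, C₀, C₁, C₀+C₁, (1 + xᵀθ)/(yC xᵀx), (1 − xᵀθ)/((1−y)C xᵀx)}. -/

import Mathlib

open Set

/-- Subdifferential of a convex function `f : ℝ → ℝ` at `r`. -/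
def subdiffR (f : ℝ → ℝ) (r : ℝ) : Set ℝ :=
  {v | ∀ z : ℝ, f r + v * (z - r) ≤ f z}

lemma subdiff_l0 (Cst : ℝ) (f : ℝ → ℝ) (hf : ∀ r, f r = Cst * max 0 (1 + r))
    (r a : ℝ) (ha : a ∈ subdiffR f r) : r = -1 ∨ a = 0 ∨ a = Cst := by
  rcases lt_trichotomy r (-1) with h | h | h
  · right; left
    have h1 := ha (r - 1)
    have h2 := ha ((r - 1) / 2)
    simp only [hf] at h1 h2
    rw [max_eq_left (by linarith : 1 + r ≤ 0)] at h1 h2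
    rw [max_eq_left (by linarith : 1 + (r - 1) ≤ 0)] at h1
    rw [max_eq_left (by linarith : 1 + (r - 1) / 2 ≤ 0)] at h2
    nlinarith
  · left; exact h
  · right; right
    have h1 := ha (r + 1)
    have h2 := ha ((r - 1) / 2)
    simp only [hf] at h1 h2
    rw [max_eq_right (by linarith : (0:ℝ) ≤ 1 + r)] at h1 h2
    rw [max_eq_right (by linarith : (0:ℝ) ≤ 1 + (r + 1))] at h1
    rw [max_eq_right (by linarith : (0:ℝ) ≤ 1 + (r - 1) / 2)] at h2
    nlinarith

lemma subdiff_l1 (Cst : ℝ) (f : ℝ → ℝ) (hf : ∀ r, f r = Cst * max 0 (1 - r))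
    (r b : ℝ) (hb : b ∈ subdiffR f r) : r = 1 ∨ b = 0 ∨ b = -Cst := by
  rcases lt_trichotomy r 1 with h | h | h
  · right; right
    have h1 := hb (r - 1)
    have h2 := hb ((r + 1) / 2)
    simp only [hf] at h1 h2
    rw [max_eq_right (by linarith : (0:ℝ) ≤ 1 - r)] at h1 h2
    rw [max_eq_right (by linarith : (0:ℝ) ≤ 1 - (r - 1))] at h1
    rw [max_eq_right (by linarith : (0:ℝ) ≤ 1 - (r + 1) / 2)] at h2
    nlinarith
  · left; exact h
  · right; left
    have h1 := hb (r + 1)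
    have h2 := hb ((r + 1) / 2)
    simp only [hf] at h1 h2
    rw [max_eq_left (by linarith : 1 - r ≤ 0)] at h1 h2
    rw [max_eq_left (by linarith : 1 - (r + 1) ≤ 0)] at h1
    rw [max_eq_left (by linarith : 1 - (r + 1) / 2 ≤ 0)] at h2
    nlinarith

/-- for the weighted Hinge loss with L2 regularization, every solution
`z` of the fixed-point subgradient condition lies in an explicit six-element set. -/
theorem hinge_L2_candidates
    (m : ℕ) (C₀ C₁ : ℝ) (hC₀ : 0 < C₀) (hC₁ : 0 < C₁)
    (l₀ l₁ : ℝ → ℝ)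
    (hl₀ : ∀ r, l₀ r = C₀ * max 0 (1 + r))
    (hl₁ : ∀ r, l₁ r = C₁ * max 0 (1 - r))
    (x : EuclideanSpace ℝ (Fin m)) (hx : x ≠ 0) (C : ℝ) (hC : 0 < C)
    (θ : EuclideanSpace ℝ (Fin m)) (y : ℝ) (hy : y ∈ Ioo (0:ℝ) 1)
    (z : ℝ)
    (hz : ∃ a ∈ subdiffR l₀ (inner ℝ x (θ - (y * C * z) • x) : ℝ),
          ∃ b ∈ subdiffR l₁ (inner ℝ x (θ + ((1 - y) * C * z) • x) : ℝ),
          z = a - b) :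
    z ∈ ({0, C₀, C₁, C₀ + C₁,
          (1 + (inner ℝ x θ : ℝ)) / (y * C * (inner ℝ x x : ℝ)),
          (1 - (inner ℝ x θ : ℝ)) / ((1 - y) * C * (inner ℝ x x : ℝ))} : Set ℝ) := by
  obtain ⟨a, ha, b, hb, hzab⟩ := hz
  set X : ℝ := (inner ℝ x x : ℝ) with hX
  set T : ℝ := (inner ℝ x θ : ℝ) with hT
  have hXne : X ≠ 0 := fun h => hx (inner_self_eq_zero.mp h)
  have hXpos : 0 < X := lt_of_le_of_ne real_inner_self_nonneg (Ne.symm hXne)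
  have hr0 : (inner ℝ x (θ - (y * C * z) • x) : ℝ) = T - y * C * z * X := by
    rw [inner_sub_right, real_inner_smul_right]
  have hr1 : (inner ℝ x (θ + ((1 - y) * C * z) • x) : ℝ) = T + (1 - y) * C * z * X := by
    rw [inner_add_right, real_inner_smul_right]
  rw [hr0] at ha
  rw [hr1] at hb
  obtain ⟨hy0, hy1⟩ := hy
  have h0 := subdiff_l0 C₀ l₀ hl₀ _ a ha
  have h1 := subdiff_l1 C₁ l₁ hl₁ _ b hb
  simp only [mem_insert_iff, mem_singleton_iff]
  rcases h0 with h0 | h0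
  · right; right; right; right; left
    rw [eq_div_iff (ne_of_gt (mul_pos (mul_pos hy0 hC) hXpos))]
    linarith
  rcases h1 with h1 | h1
  · right; right; right; right; right
    rw [eq_div_iff (ne_of_gt (mul_pos (mul_pos (by linarith) hC) hXpos))]
    linarith
  rcases h0 with h0 | h0 <;> rcases h1 with h1 | h1 <;> subst h0 h1 hzab <;> simp
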